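/- arXiv:2211.10090 — 4 statements merged into one kernel-verified Lean document; each statement's English description precedes it below -/
import Mathlib

section
/- Let n, k be integers with 0 ≤ 3k ≤ n. Then the holomorphic functions Δ^i·E₄^{n−3i} on ℍ, for 0 ≤ i ≤ k, are linearly independent over ℂ, and likewise the functions Δ^i·E₄^{n−3i}·E₆, for 0 ≤ i ≤ k, are linearly independent over ℂ. -/
open Complex Finset

noncomputable def E2 (τ : ℂ) : ℂ :=
  1 - 24 * ∑' n : ℕ, (∑ d ∈ Nat.divisors (n + 1), (d : ℂ)) *
    Complex.exp (2 * (Real.pi : ℂ) * I * τ) ^ (n + 1)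

noncomputable def E4 (τ : ℂ) : ℂ :=
  1 + 240 * ∑' n : ℕ, (∑ d ∈ Nat.divisors (n + 1), (d : ℂ) ^ 3) *
    Complex.exp (2 * (Real.pi : ℂ) * I * τ) ^ (n + 1)

noncomputable def E6 (τ : ℂ) : ℂ :=
  1 - 504 * ∑' n : ℕ, (∑ d ∈ Nat.divisors (n + 1), (d : ℂ) ^ 5) *
    Complex.exp (2 * (Real.pi : ℂ) * I * τ) ^ (n + 1)

noncomputable def Delta (τ : ℂ) : ℂ :=
  Complex.exp (2 * (Real.pi : ℂ) * I * τ) *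
    ∏' n : ℕ, (1 - Complex.exp (2 * (Real.pi : ℂ) * I * τ) ^ (n + 1)) ^ 24

/-- Serre bracket `{1, f}_k`. -/
noncomputable def serre (k : ℤ) (f : ℂ → ℂ) : ℂ → ℂ := fun τ =>
  (1 / (2 * (Real.pi : ℂ) * I)) * (deriv f τ - ((Real.pi : ℂ) * I * (k : ℂ) / 6) * E2 τ * f τ)

/-- holomorphic on the upper half plane -/
def HoloOnH (f : ℂ → ℂ) : Prop := ∀ τ : ℂ, 0 < τ.im → DifferentiableAt ℂ f τ

/-- Möbius action of `SL(2, ℤ)` on the upper half plane. -/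
noncomputable def moeb (g : Matrix.SpecialLinearGroup (Fin 2) ℤ) (τ : ℂ) : ℂ :=
  ((g 0 0 : ℂ) * τ + (g 0 1 : ℂ)) / ((g 1 0 : ℂ) * τ + (g 1 1 : ℂ))

/-- Möbius action of `SL(2, ℝ)` on the upper half plane. -/
noncomputable def moebR (g : Matrix.SpecialLinearGroup (Fin 2) ℝ) (τ : ℂ) : ℂ :=
  ((g 0 0 : ℂ) * τ + (g 0 1 : ℂ)) / ((g 1 0 : ℂ) * τ + (g 1 1 : ℂ))

/-- modular form of weight `k` for `Γ ≤ SL(2, ℤ)` -/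
def IsModularForm (Γ : Subgroup (Matrix.SpecialLinearGroup (Fin 2) ℤ)) (k : ℤ)
    (f : ℂ → ℂ) : Prop :=
  HoloOnH f ∧
  (∀ g ∈ Γ, ∀ τ : ℂ, 0 < τ.im →
    f (moeb g τ) = ((g 1 0 : ℂ) * τ + (g 1 1 : ℂ)) ^ k * f τ) ∧
  (∀ g : Matrix.SpecialLinearGroup (Fin 2) ℤ, ∃ C A : ℝ, ∀ τ : ℂ, 0 < τ.im → A ≤ τ.im →
    ‖((g 1 0 : ℂ) * τ + (g 1 1 : ℂ)) ^ (-k) * f (moeb g τ)‖ ≤ C)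

section Aux
open Filter Topology
set_option maxHeartbeats 1000000

noncomputable def qr (t : ℝ) : ℝ := Real.exp (-(2 * Real.pi * t))

lemma qr_pos (t : ℝ) : 0 < qr t := Real.exp_pos _

lemma qc (t : ℝ) : Complex.exp (2 * (Real.pi : ℂ) * I * (I * (t : ℂ))) = ((qr t : ℝ) : ℂ) := by
  rw [qr, Complex.ofReal_exp]
  congr 1
  push_cast
  linear_combination (2 * (Real.pi : ℂ) * (t : ℂ)) * Complex.I_sq

lemma qr_small {t : ℝ} (ht : 1 ≤ t) : qr t ≤ 1 / 48 := by
  have hpi : (3 : ℝ) ≤ Real.pi := Real.pi_gt_three.le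
  have h1 : qr t ≤ Real.exp (-6) := by
    apply Real.exp_le_exp.mpr; nlinarith
  have h3 : (2.7 : ℝ) ≤ Real.exp 1 := by nlinarith [Real.exp_one_gt_d9]
  have h2 : (48 : ℝ) ≤ Real.exp 6 := by
    calc (48 : ℝ) ≤ 2.7 ^ (6 : ℕ) := by norm_num
    _ ≤ (Real.exp 1) ^ (6 : ℕ) := pow_le_pow_left₀ (by norm_num) h3 6
    _ = Real.exp 6 := by rw [← Real.exp_nat_mul]; norm_num
  have h4 : Real.exp (-6) ≤ 1 / 48 := by
    rw [Real.exp_neg]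
    rw [inv_le_comm₀ (Real.exp_pos 6) (by norm_num)]
    linarith
  linarith

lemma qr_tendsto : Tendsto qr atTop (𝓝 0) := by
  apply Real.tendsto_exp_atBot.comp
  have h : Tendsto (fun t : ℝ => 2 * Real.pi * t) atTop atTop :=
    (tendsto_id.const_mul_atTop (by positivity))
  exact tendsto_neg_atTop_atBot.comp h

lemma sigma_bound (m n : ℕ) :
    ‖∑ d ∈ Nat.divisors (n + 1), (d : ℂ) ^ m‖ ≤ ((n : ℝ) + 1) ^ (m + 1) := by
  have hsub : Nat.divisors (n + 1) ⊆ Finset.Icc 1 (n + 1) := by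
    intro d hd
    rw [Finset.mem_Icc]
    exact ⟨Nat.pos_of_mem_divisors hd, Nat.divisor_le hd⟩
  calc ‖∑ d ∈ Nat.divisors (n + 1), (d : ℂ) ^ m‖
      ≤ ∑ d ∈ Nat.divisors (n + 1), ‖(d : ℂ) ^ m‖ := norm_sum_le _ _
    _ ≤ ∑ _d ∈ Nat.divisors (n + 1), ((n : ℝ) + 1) ^ m := by
        apply Finset.sum_le_sum
        intro d hd
        rw [norm_pow, Complex.norm_natCast]
        apply pow_le_pow_left₀ (by positivity)
        have := Nat.divisor_le hd
        exact_mod_cast Nat.cast_le.mpr this |>.trans_eq (by push_cast; ring)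
    _ = ((Nat.divisors (n + 1)).card : ℝ) * ((n : ℝ) + 1) ^ m := by
        rw [Finset.sum_const, nsmul_eq_mul]
    _ ≤ ((n : ℝ) + 1) * ((n : ℝ) + 1) ^ m := by
        have h := Finset.card_le_card hsub
        rw [Nat.card_Icc] at h
        have : ((Nat.divisors (n + 1)).card : ℝ) ≤ (n : ℝ) + 1 := by
          exact_mod_cast h.trans_eq (by omega)
        have hp : (0:ℝ) ≤ ((n : ℝ) + 1) ^ m := by positivity
        nlinarith
    _ = ((n : ℝ) + 1) ^ (m + 1) := by ring

lemma series_tendsto (m : ℕ) (a : ℕ → ℂ) (ha : ∀ n, ‖a n‖ ≤ ((n : ℝ) + 1) ^ m) :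
    Tendsto (fun t : ℝ =>
        ∑' n : ℕ, a n * Complex.exp (2 * (Real.pi : ℂ) * I * (I * (t : ℂ))) ^ (n + 1))
      atTop (𝓝 0) := by
  have hsum2 : Summable (fun n : ℕ => ((n : ℝ) + 1) ^ m * (1 / 2 : ℝ) ^ (n + 1)) := by
    have h := summable_pow_mul_geometric_of_norm_lt_one (R := ℝ) m (r := 1 / 2) (by norm_num)
    have h2 := (summable_nat_add_iff 1).mpr h
    apply h2.congr
    intro n
    push_cast
    ring
  set C := ∑' n : ℕ, ((n : ℝ) + 1) ^ m * (1 / 2 : ℝ) ^ (n + 1) with hC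
  apply squeeze_zero_norm' (a := fun t => 2 * C * qr t)
  · filter_upwards [eventually_ge_atTop 1] with t ht
    have hq0 : 0 < qr t := qr_pos t
    have hq : qr t ≤ 1 / 2 := (qr_small ht).trans (by norm_num)
    have hle : ∀ n : ℕ, ‖a n * ((qr t : ℝ) : ℂ) ^ (n + 1)‖ ≤
        2 * qr t * (((n : ℝ) + 1) ^ m * (1 / 2 : ℝ) ^ (n + 1)) := by
      intro n
      rw [norm_mul, norm_pow, Complex.norm_real, Real.norm_eq_abs, abs_of_pos hq0]
      have h1 : qr t ^ (n + 1) ≤ 2 * qr t * (1 / 2 : ℝ) ^ (n + 1) := by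
        have hpn : qr t ^ n ≤ (1 / 2 : ℝ) ^ n := pow_le_pow_left₀ hq0.le hq n
        calc qr t ^ (n + 1) = qr t * qr t ^ n := by ring
          _ ≤ qr t * (1 / 2 : ℝ) ^ n := by
              exact mul_le_mul_of_nonneg_left hpn hq0.le
          _ = 2 * qr t * (1 / 2 : ℝ) ^ (n + 1) := by ring
      calc ‖a n‖ * qr t ^ (n + 1) ≤ ((n : ℝ) + 1) ^ m * (2 * qr t * (1 / 2 : ℝ) ^ (n + 1)) := by
            apply mul_le_mul (ha n) h1 (by positivity) (by positivity)
        _ = 2 * qr t * (((n : ℝ) + 1) ^ m * (1 / 2 : ℝ) ^ (n + 1)) := by ring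
    have hnorm : Summable (fun n : ℕ => ‖a n * ((qr t : ℝ) : ℂ) ^ (n + 1)‖) :=
      Summable.of_nonneg_of_le (fun n => norm_nonneg _) hle (hsum2.mul_left _)
    calc ‖∑' n : ℕ, a n * Complex.exp (2 * (Real.pi : ℂ) * I * (I * (t : ℂ))) ^ (n + 1)‖
        = ‖∑' n : ℕ, a n * ((qr t : ℝ) : ℂ) ^ (n + 1)‖ := by rw [qc t]
      _ ≤ ∑' n : ℕ, ‖a n * ((qr t : ℝ) : ℂ) ^ (n + 1)‖ := norm_tsum_le_tsum_norm hnorm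
      _ ≤ ∑' n : ℕ, 2 * qr t * (((n : ℝ) + 1) ^ m * (1 / 2 : ℝ) ^ (n + 1)) :=
          Summable.tsum_le_tsum hle hnorm (hsum2.mul_left _)
      _ = 2 * qr t * C := tsum_mul_left
      _ = 2 * C * qr t := by ring
  · have := qr_tendsto.const_mul (2 * C)
    simpa using this

lemma E4_tendsto : Tendsto (fun t : ℝ => E4 (I * (t : ℂ))) atTop (𝓝 1) := by
  have h := series_tendsto 4 (fun n => ∑ d ∈ Nat.divisors (n + 1), (d : ℂ) ^ 3)
    (fun n => sigma_bound 3 n)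
  have h2 : Tendsto (fun t : ℝ => 1 + 240 *
      ∑' n : ℕ, (∑ d ∈ Nat.divisors (n + 1), (d : ℂ) ^ 3) *
        Complex.exp (2 * (Real.pi : ℂ) * I * (I * (t : ℂ))) ^ (n + 1))
      atTop (𝓝 (1 + 240 * 0)) := tendsto_const_nhds.add (h.const_mul 240)
  simpa [E4] using h2

lemma E6_tendsto : Tendsto (fun t : ℝ => E6 (I * (t : ℂ))) atTop (𝓝 1) := by
  have h := series_tendsto 6 (fun n => ∑ d ∈ Nat.divisors (n + 1), (d : ℂ) ^ 5)
    (fun n => sigma_bound 5 n)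
  have h2 : Tendsto (fun t : ℝ => 1 - 504 *
      ∑' n : ℕ, (∑ d ∈ Nat.divisors (n + 1), (d : ℂ) ^ 5) *
        Complex.exp (2 * (Real.pi : ℂ) * I * (I * (t : ℂ))) ^ (n + 1))
      atTop (𝓝 (1 - 504 * 0)) := tendsto_const_nhds.sub (h.const_mul 504)
  simpa [E6] using h2

lemma prod_one_sub_ge (s : Finset ℕ) (a : ℕ → ℝ) (h0 : ∀ n, 0 ≤ a n) (h1 : ∀ n, a n ≤ 1) :
    1 - ∑ n ∈ s, a n ≤ ∏ n ∈ s, (1 - a n) := by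
  classical
  induction s using Finset.induction with
  | empty => simp
  | insert x s' hx ih =>
    rw [Finset.prod_insert hx, Finset.sum_insert hx]
    have hsn : 0 ≤ ∑ n ∈ s', a n := Finset.sum_nonneg fun n _ => h0 n
    have := mul_le_mul_of_nonneg_left ih (sub_nonneg.2 (h1 x))
    nlinarith [h0 x, h1 x]

lemma delta_prod (q : ℝ) (hq0 : 0 < q) (hq : q ≤ 1 / 48) :
    ∃ P : ℝ, (∏' n : ℕ, ((1 : ℂ) - (q : ℂ) ^ (n + 1)) ^ 24) = (P : ℂ) ∧
      1 - 48 * q ≤ P ∧ P ≤ 1 := by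
  have hqlt : q < 1 := lt_of_le_of_lt hq (by norm_num)
  have hqn : ∀ n : ℕ, q ^ (n + 1) ≤ q := fun n => by
    calc q ^ (n + 1) ≤ q ^ 1 := pow_le_pow_of_le_one hq0.le hqlt.le (Nat.le_add_left 1 n)
      _ = q := pow_one q
  have hx1 : ∀ n : ℕ, q ^ (n + 1) ≤ 1 / 48 := fun n => (hqn n).trans hq
  have hxpos : ∀ n : ℕ, (0:ℝ) ≤ q ^ (n + 1) := fun n => by positivity
  have hpos : ∀ n : ℕ, 0 < 1 - q ^ (n + 1) := fun n => by nlinarith [hx1 n]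
  have hfpos : ∀ n : ℕ, 0 < (1 - q ^ (n + 1)) ^ 24 := fun n => pow_pos (hpos n) 24
  have hgeom : Summable (fun n : ℕ => q ^ (n + 1)) :=
    (summable_nat_add_iff 1).mpr (summable_geometric_of_lt_one hq0.le hqlt)
  have hlog : Summable (fun n : ℕ => Real.log ((1 - q ^ (n + 1)) ^ 24)) := by
    apply Summable.of_abs
    apply Summable.of_nonneg_of_le (fun n => abs_nonneg _) _ (hgeom.mul_left 48)
    intro n
    rw [Real.log_pow]
    have hlx : |Real.log (1 - q ^ (n + 1))| ≤ 2 * q ^ (n + 1) := by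
      set x := q ^ (n + 1) with hxdef
      have hx0 : 0 ≤ x := hxpos n
      have hx : x ≤ 1 / 48 := hx1 n
      have hpx : (0:ℝ) < 1 - x := hpos n
      have h1 : Real.log (1 - x) ≤ 0 := Real.log_nonpos (by linarith) (by linarith)
      rw [abs_of_nonpos h1]
      have h2 : Real.log (1 - x)⁻¹ ≤ (1 - x)⁻¹ - 1 :=
        Real.log_le_sub_one_of_pos (by positivity)
      have h5 : (1 - x)⁻¹ - 1 = x * (1 - x)⁻¹ := by field_simp; ring
      have h6 : (1 - x)⁻¹ ≤ 2 := by
        rw [inv_le_comm₀ hpx (by norm_num)]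
        linarith
      have h7 : x * (1 - x)⁻¹ ≤ 2 * x := by nlinarith
      rw [show -Real.log (1 - x) = Real.log (1 - x)⁻¹ by rw [Real.log_inv]]
      linarith
    rw [abs_mul]
    have : |(24 : ℕ) * Real.log (1 - q ^ (n + 1))| ≤ 24 * (2 * q ^ (n + 1)) := by
      rw [abs_mul]
      simp only [Nat.abs_cast]
      push_cast
      nlinarith [abs_nonneg (Real.log (1 - q ^ (n + 1)))]
    calc |((24:ℕ) : ℝ)| * |Real.log (1 - q ^ (n + 1))| = |(24 : ℕ) * Real.log (1 - q ^ (n + 1))| := by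
          rw [abs_mul]
      _ ≤ 24 * (2 * q ^ (n + 1)) := this
      _ = 48 * q ^ (n + 1) := by ring
  have hmult : Multipliable (fun n : ℕ => (1 - q ^ (n + 1)) ^ 24) :=
    Real.multipliable_of_summable_log (fun n => hfpos n) hlog
  set P := ∏' n : ℕ, (1 - q ^ (n + 1)) ^ 24 with hP
  have hprod := hmult.hasProd
  have hsumq : ∀ s : Finset ℕ, ∑ n ∈ s, q ^ (n + 1) ≤ 2 * q := by
    intro s
    have h1 : ∑ n ∈ s, q ^ (n + 1) ≤ ∑' n : ℕ, q ^ (n + 1) :=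
      Summable.sum_le_tsum s (fun n _ => hxpos n) hgeom
    have h2 : ∑' n : ℕ, q ^ (n + 1) = q * (1 - q)⁻¹ := by
      calc ∑' n : ℕ, q ^ (n + 1) = ∑' n : ℕ, q * q ^ n := tsum_congr fun n => by ring
        _ = q * ∑' n : ℕ, q ^ n := tsum_mul_left
        _ = q * (1 - q)⁻¹ := by rw [tsum_geometric_of_lt_one hq0.le hqlt]
    have h3 : (1 - q)⁻¹ ≤ 2 := by
      rw [inv_le_comm₀ (by linarith) (by norm_num)]
      linarith
    nlinarith
  have hlower : ∀ s : Finset ℕ, 1 - 48 * q ≤ ∏ n ∈ s, (1 - q ^ (n + 1)) ^ 24 := by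
    intro s
    have step2 : ∏ n ∈ s, (1 - 24 * q ^ (n + 1)) ≤ ∏ n ∈ s, (1 - q ^ (n + 1)) ^ 24 := by
      apply Finset.prod_le_prod
      · intro n _; nlinarith [hx1 n, hxpos n]
      · intro n _
        calc 1 - 24 * q ^ (n + 1) = 1 + (24 : ℕ) * (-(q ^ (n + 1))) := by push_cast; ring
          _ ≤ (1 + -(q ^ (n + 1))) ^ 24 := one_add_mul_le_pow (by nlinarith [hx1 n, hxpos n]) 24
          _ = (1 - q ^ (n + 1)) ^ 24 := by ring
    have step3 : 1 - ∑ n ∈ s, 24 * q ^ (n + 1) ≤ ∏ n ∈ s, (1 - 24 * q ^ (n + 1)) := by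
      apply prod_one_sub_ge
      · intro n; nlinarith [hxpos n]
      · intro n; nlinarith [hxpos n, hx1 n]
    have step4 : ∑ n ∈ s, 24 * q ^ (n + 1) = 24 * ∑ n ∈ s, q ^ (n + 1) := by
      rw [Finset.mul_sum]
    nlinarith [hsumq s]
  have hupper : ∀ s : Finset ℕ, ∏ n ∈ s, (1 - q ^ (n + 1)) ^ 24 ≤ 1 := by
    intro s
    apply Finset.prod_le_one (fun n _ => (hfpos n).le)
    intro n _
    apply pow_le_one₀ (hpos n).le
    nlinarith [hxpos n]
  have hPl : 1 - 48 * q ≤ P := le_hasProd_of_le_prod hprod hlower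
  have hPu : P ≤ 1 := hasProd_le_of_prod_le hprod hupper
  have hmap := hprod.map Complex.ofRealHom Complex.continuous_ofReal
  have heq : (Complex.ofRealHom ∘ fun n : ℕ => (1 - q ^ (n + 1)) ^ 24) =
      fun n : ℕ => ((1 : ℂ) - (q : ℂ) ^ (n + 1)) ^ 24 := by
    funext n
    simp only [Function.comp_apply, Complex.ofRealHom_eq_coe]
    push_cast
    ring
  rw [heq] at hmap
  exact ⟨P, hmap.tprod_eq, hPl, hPu⟩

lemma Delta_ratio (t : ℝ) (ht : 1 ≤ t) :
    ∃ P : ℝ, Delta (I * (t : ℂ)) = ((qr t : ℝ) : ℂ) * (P : ℂ) ∧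
      1 - 48 * qr t ≤ P ∧ P ≤ 1 := by
  obtain ⟨P, hprodeq, h1, h2⟩ := delta_prod (qr t) (qr_pos t) (qr_small ht)
  refine ⟨P, ?_, h1, h2⟩
  rw [Delta, qc t, hprodeq]

lemma ratio_tendsto :
    Tendsto (fun t : ℝ => Delta (I * (t : ℂ)) / ((qr t : ℝ) : ℂ)) atTop (𝓝 1) := by
  have h : ∀ᶠ t : ℝ in atTop, ‖Delta (I * (t : ℂ)) / ((qr t : ℝ) : ℂ) - 1‖ ≤ 48 * qr t := by
    filter_upwards [eventually_ge_atTop 1] with t ht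
    obtain ⟨P, heq, h1, h2⟩ := Delta_ratio t ht
    have hq0 : ((qr t : ℝ) : ℂ) ≠ 0 := by
      exact_mod_cast (qr_pos t).ne'
    rw [heq, mul_div_cancel_left₀ _ hq0]
    rw [show ((P : ℝ) : ℂ) - 1 = ((P - 1 : ℝ) : ℂ) by push_cast; ring, Complex.norm_real,
      Real.norm_eq_abs, abs_le]
    constructor <;> nlinarith [qr_pos t]
  have h0 : Tendsto (fun t : ℝ => Delta (I * (t : ℂ)) / ((qr t : ℝ) : ℂ) - 1) atTop (𝓝 0) := by
    apply squeeze_zero_norm' h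
    simpa using qr_tendsto.const_mul (48 : ℝ)
  have h1 : Tendsto (fun t : ℝ => (Delta (I * (t : ℂ)) / ((qr t : ℝ) : ℂ) - 1) + 1)
      atTop (𝓝 (0 + 1)) := h0.add tendsto_const_nhds
  simpa using h1

lemma Delta_tendsto : Tendsto (fun t : ℝ => Delta (I * (t : ℂ))) atTop (𝓝 0) := by
  have hq : Tendsto (fun t : ℝ => ((qr t : ℝ) : ℂ)) atTop (𝓝 0) := by
    have := (Complex.continuous_ofReal.tendsto 0).comp qr_tendsto
    simpa [Function.comp_def] using this
  have h := ratio_tendsto.mul hq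
  rw [one_mul] at h
  apply h.congr
  intro t
  exact div_mul_cancel₀ _ (by exact_mod_cast (qr_pos t).ne')

lemma indep_aux (n k : ℕ) (g : ℂ → ℂ)
    (hg : Tendsto (fun t : ℝ => g (I * (t : ℂ))) atTop (𝓝 1)) :
    LinearIndependent ℂ (fun i : Fin (k + 1) => fun τ : {z : ℂ // 0 < z.im} =>
      Delta τ.1 ^ (i : ℕ) * E4 τ.1 ^ (n - 3 * (i : ℕ)) * g τ.1) := by
  rw [Fintype.linearIndependent_iff]
  intro c hc
  have hpt : ∀ t : ℝ, 1 ≤ t →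
      ∑ j : Fin (k + 1), c j * (Delta (I * (t : ℂ)) ^ (j : ℕ) *
        E4 (I * (t : ℂ)) ^ (n - 3 * (j : ℕ)) * g (I * (t : ℂ))) = 0 := by
    intro t ht
    have h0 : (0 : ℝ) < (I * (t : ℂ)).im := by
      simp only [Complex.mul_im, Complex.I_re, Complex.I_im, Complex.ofReal_re,
        Complex.ofReal_im]
      linarith
    have := congrFun hc ⟨I * (t : ℂ), h0⟩
    simpa using this
  have step : ∀ i : Fin (k + 1), (∀ j : Fin (k + 1), (j : ℕ) < (i : ℕ) → c j = 0) → c i = 0 := by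
    intro i ih
    set F : ℝ → ℂ := fun t => ∑ j : Fin (k + 1),
      c j * (Delta (I * (t : ℂ)) ^ (j : ℕ) / ((qr t : ℝ) : ℂ) ^ (i : ℕ)) *
        E4 (I * (t : ℂ)) ^ (n - 3 * (j : ℕ)) * g (I * (t : ℂ)) with hF
    have hF0 : ∀ᶠ t in atTop, F t = 0 := by
      filter_upwards [eventually_ge_atTop 1] with t ht
      have hq0 : ((qr t : ℝ) : ℂ) ≠ 0 := by exact_mod_cast (qr_pos t).ne'
      have : F t = (∑ j : Fin (k + 1), c j * (Delta (I * (t : ℂ)) ^ (j : ℕ) *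
          E4 (I * (t : ℂ)) ^ (n - 3 * (j : ℕ)) * g (I * (t : ℂ)))) /
            ((qr t : ℝ) : ℂ) ^ (i : ℕ) := by
        rw [hF, Finset.sum_div]
        apply Finset.sum_congr rfl
        intro j _
        field_simp
      rw [this, hpt t ht, zero_div]
    have hFlim : Tendsto F atTop (𝓝 (c i)) := by
      have hterm : ∀ j : Fin (k + 1),
          Tendsto (fun t : ℝ => c j * (Delta (I * (t : ℂ)) ^ (j : ℕ) /
            ((qr t : ℝ) : ℂ) ^ (i : ℕ)) *
            E4 (I * (t : ℂ)) ^ (n - 3 * (j : ℕ)) * g (I * (t : ℂ)))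
            atTop (𝓝 (if j = i then c i else 0)) := by
        intro j
        rcases lt_trichotomy (j : ℕ) (i : ℕ) with hlt | heq | hgt
        · have hcj : c j = 0 := ih j hlt
          have hne : j ≠ i := by
            intro hji; rw [hji] at hlt; exact lt_irrefl _ hlt
          simp only [hcj, zero_mul, if_neg hne]
          exact tendsto_const_nhds
        · have hji : j = i := Fin.ext heq
          subst hji
          simp only [if_pos rfl]
          have hmain : Tendsto (fun t : ℝ => c j * (Delta (I * (t : ℂ)) /
              ((qr t : ℝ) : ℂ)) ^ (j : ℕ) *
              E4 (I * (t : ℂ)) ^ (n - 3 * (j : ℕ)) * g (I * (t : ℂ)))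
              atTop (𝓝 (c j * 1 ^ (j : ℕ) * 1 ^ (n - 3 * (j : ℕ)) * 1)) := by
            exact (((tendsto_const_nhds.mul (ratio_tendsto.pow _)).mul
              (E4_tendsto.pow _)).mul hg)
          simp only [one_pow, mul_one] at hmain
          apply hmain.congr
          intro t
          rw [div_pow]
        · have hd : (j : ℕ) = (i : ℕ) + ((j : ℕ) - (i : ℕ)) := by omega
          have hdpos : (j : ℕ) - (i : ℕ) ≠ 0 := by omega
          have hmain : Tendsto (fun t : ℝ => c j * ((Delta (I * (t : ℂ)) /
              ((qr t : ℝ) : ℂ)) ^ (i : ℕ) * Delta (I * (t : ℂ)) ^ ((j : ℕ) - (i : ℕ))) *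
              E4 (I * (t : ℂ)) ^ (n - 3 * (j : ℕ)) * g (I * (t : ℂ)))
              atTop (𝓝 (c j * (1 ^ (i : ℕ) * 0 ^ ((j : ℕ) - (i : ℕ))) *
                1 ^ (n - 3 * (j : ℕ)) * 1)) := by
            exact (((tendsto_const_nhds.mul
              ((ratio_tendsto.pow _).mul (Delta_tendsto.pow _))).mul
              (E4_tendsto.pow _)).mul hg)
          have hne : j ≠ i := by
            intro hji; rw [hji] at hgt; exact lt_irrefl _ hgt
          rw [zero_pow hdpos] at hmain
          simp only [one_pow, mul_zero, zero_mul, mul_one, if_neg hne] at hmain ⊢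
          apply hmain.congr
          intro t
          congr 1
          congr 1
          congr 1
          rw [div_pow, div_mul_eq_mul_div, ← pow_add, ← hd]
      have := tendsto_finset_sum Finset.univ (fun j _ => hterm j)
      simpa [Finset.sum_ite_eq'] using this
    have hzero : Tendsto F atTop (𝓝 0) :=
      Tendsto.congr' (by filter_upwards [hF0] with t ht using ht.symm) tendsto_const_nhds
    exact tendsto_nhds_unique hFlim hzero
  intro i
  have all : ∀ m : ℕ, ∀ i : Fin (k + 1), (i : ℕ) = m → c i = 0 := by
    intro m
    induction m using Nat.strong_induction_on with
    | _ m ihm =>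
      intro i him
      apply step i
      intro j hj
      exact ihm (j : ℕ) (by omega) j rfl
  exact all (i : ℕ) i rfl

end Aux

/-- For `0 ≤ 3k ≤ n`, the functions `Δ^i·E₄^{n−3i}` (`0 ≤ i ≤ k`) on `ℍ`
are linearly independent over `ℂ`, and likewise the functions `Δ^i·E₄^{n−3i}·E₆`. -/
theorem delta_E4_powers_linearIndependent (n k : ℕ) (hkn : 3 * k ≤ n) :
    LinearIndependent ℂ (fun i : Fin (k + 1) => fun τ : {z : ℂ // 0 < z.im} =>
      Delta τ.1 ^ (i : ℕ) * E4 τ.1 ^ (n - 3 * (i : ℕ))) ∧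
    LinearIndependent ℂ (fun i : Fin (k + 1) => fun τ : {z : ℂ // 0 < z.im} =>
      Delta τ.1 ^ (i : ℕ) * E4 τ.1 ^ (n - 3 * (i : ℕ)) * E6 τ.1) := by
  constructor
  · have h1 := indep_aux n k (fun _ => 1) tendsto_const_nhds
    simpa using h1
  · exact indep_aux n k E6 E6_tendsto
end

section
/- Let n ≥ 0 be an integer, let g = ((α,β),(γ,δ)) ∈ SL(2,ℝ), and let f be a holomorphic function on ℍ that is weakly modular of weight −n for g. Then for every integer k with 0 ≤ k ≤ n and every τ ∈ ℍ: ((−1)^k·(n−k)!/k!)·f^{(k)}(gτ) = Σ_{m=0}^k [γ^{k−m}·(γτ+δ)^{−n+k+m}/(k−m)!]·((−1)^m·(n−m)!/m!)·f^{(m)}(τ). -/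
open Complex Finset

private lemma SL2R_detC (g : Matrix.SpecialLinearGroup (Fin 2) ℝ) :
    (g 0 0 : ℂ) * (g 1 1 : ℂ) - (g 0 1 : ℂ) * (g 1 0 : ℂ) = 1 := by
  have h := g.2
  rw [Matrix.det_fin_two] at h
  exact_mod_cast h

private lemma denom_ne (g : Matrix.SpecialLinearGroup (Fin 2) ℝ) (τ : ℂ) (hτ : 0 < τ.im) :
    (g 1 0 : ℂ) * τ + (g 1 1 : ℂ) ≠ 0 := by
  intro h
  have him := congrArg Complex.im h
  simp [Complex.add_im, Complex.mul_im] at him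
  have hc : (g 1 0 : ℝ) = 0 := by
    rcases him with h1 | h1
    · exact h1
    · exact absurd h1 hτ.ne'
  have hd : (g 1 1 : ℝ) = 0 := by
    have hre := congrArg Complex.re h
    simp [Complex.add_re, Complex.mul_re, hc] at hre
    exact hre
  have hdet := g.2
  rw [Matrix.det_fin_two] at hdet
  rw [hc, hd] at hdet
  simp at hdet

private lemma im_moebR (g : Matrix.SpecialLinearGroup (Fin 2) ℝ) (τ : ℂ) (hτ : 0 < τ.im) :
    0 < (moebR g τ).im := by
  have hne := denom_ne g τ hτ
  have hns : 0 < Complex.normSq ((g 1 0 : ℂ) * τ + (g 1 1 : ℂ)) := Complex.normSq_pos.2 hne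
  have hdet := g.2
  rw [Matrix.det_fin_two] at hdet
  have key : (moebR g τ).im = τ.im / Complex.normSq ((g 1 0 : ℂ) * τ + (g 1 1 : ℂ)) := by
    rw [moebR, Complex.div_im, ← sub_div]
    congr 1
    simp only [Complex.add_re, Complex.add_im, Complex.mul_re, Complex.mul_im,
      Complex.ofReal_re, Complex.ofReal_im]
    linear_combination τ.im * hdet
  rw [key]
  exact div_pos hτ hns

private lemma moebR_hasDerivAt (g : Matrix.SpecialLinearGroup (Fin 2) ℝ) (τ : ℂ)
    (hτ : 0 < τ.im) :
    HasDerivAt (moebR g) (1 / ((g 1 0 : ℂ) * τ + (g 1 1 : ℂ)) ^ 2) τ := by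
  have hne := denom_ne g τ hτ
  have h1 : HasDerivAt (fun z : ℂ => (g 0 0 : ℂ) * z + (g 0 1 : ℂ)) ((g 0 0 : ℂ)) τ := by
    simpa using ((hasDerivAt_id τ).const_mul ((g 0 0 : ℂ))).add_const ((g 0 1 : ℂ))
  have h2 : HasDerivAt (fun z : ℂ => (g 1 0 : ℂ) * z + (g 1 1 : ℂ)) ((g 1 0 : ℂ)) τ := by
    simpa using ((hasDerivAt_id τ).const_mul ((g 1 0 : ℂ))).add_const ((g 1 1 : ℂ))
  have h := h1.div h2 hne
  refine h.congr_deriv ?_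
  rw [div_eq_div_iff (pow_ne_zero 2 hne) (pow_ne_zero 2 hne)]
  linear_combination ((((g 1 0 : ℂ) * τ + (g 1 1 : ℂ)) ^ 2)) * SL2R_detC g


private lemma sum_step (k : ℕ) (S : ℂ) (T P Q : ℕ → ℂ)
    (h0 : T 0 = S * P 0) (hk : T (k + 1) = S * Q k)
    (hm : ∀ m, m < k → T (m + 1) = S * P (m + 1) + S * Q m) :
    ∑ m ∈ Finset.range (k + 1 + 1), T m
      = S * ∑ m ∈ Finset.range (k + 1), (P m + Q m) := by
  rw [Finset.mul_sum]
  simp only [mul_add]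
  rw [Finset.sum_add_distrib]
  rw [Finset.sum_range_succ' T (k + 1)]
  rw [Finset.sum_range_succ (fun m => T (m + 1)) k]
  rw [Finset.sum_range_succ' (fun m => S * P m) k]
  rw [Finset.sum_range_succ (fun m => S * Q m) k]
  have hcongr : ∑ m ∈ Finset.range k, T (m + 1)
      = ∑ m ∈ Finset.range k, (S * P (m + 1) + S * Q m) :=
    Finset.sum_congr rfl fun m hmem => hm m (Finset.mem_range.mp hmem)
  rw [hcongr, Finset.sum_add_distrib, h0, hk]
  ring

set_option maxHeartbeats 2000000 in
private lemma key_sum (n k : ℕ) (hkn : k < n) (c J : ℂ) (hJ : J ≠ 0) (D : ℕ → ℂ) :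
    ∑ m ∈ Finset.range (k + 1 + 1),
        (c ^ (k + 1 - m) * J ^ (-(n : ℤ) + ((k : ℤ) + 1) + (m : ℤ)) / ((k + 1 - m).factorial : ℂ))
          * ((-1 : ℂ) ^ m * ((n - m).factorial : ℂ) / (m.factorial : ℂ)) * D m
      = (-(J ^ 2) / (((n : ℂ) - (k : ℂ)) * ((k : ℂ) + 1))) *
          ∑ m ∈ Finset.range (k + 1),
            ((c ^ (k - m) * (((-(n : ℤ) + (k : ℤ) + (m : ℤ) : ℤ) : ℂ)
                  * J ^ (-(n : ℤ) + (k : ℤ) + (m : ℤ) - 1) * c) / ((k - m).factorial : ℂ))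
                * ((-1 : ℂ) ^ m * ((n - m).factorial : ℂ) / (m.factorial : ℂ)) * D m
              + (c ^ (k - m) * J ^ (-(n : ℤ) + (k : ℤ) + (m : ℤ)) / ((k - m).factorial : ℂ))
                * ((-1 : ℂ) ^ m * ((n - m).factorial : ℂ) / (m.factorial : ℂ)) * D (m + 1)) := by
  have fne : ∀ m : ℕ, ((m.factorial : ℕ) : ℂ) ≠ 0 :=
    fun m => Nat.cast_ne_zero.mpr (Nat.factorial_ne_zero m)
  have hnk : ((n : ℂ) - (k : ℂ)) ≠ 0 := by
    have h : ((n - k : ℕ) : ℂ) ≠ 0 := Nat.cast_ne_zero.mpr (by omega)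
    rwa [Nat.cast_sub hkn.le] at h
  have hk1 : ((k : ℂ) + 1) ≠ 0 := Nat.cast_add_one_ne_zero k
  refine sum_step k _ _ _ _ ?_ ?_ ?_
  · -- T 0 = S * P 0
    show (c ^ (k + 1 - 0) * J ^ (-(n : ℤ) + ((k : ℤ) + 1) + ((0:ℕ) : ℤ)) / ((k + 1 - 0).factorial : ℂ))
          * ((-1 : ℂ) ^ (0:ℕ) * ((n - 0).factorial : ℂ) / ((0:ℕ).factorial : ℂ)) * D 0 = _
    rw [show (-(n : ℤ) + ((k : ℤ) + 1) + ((0:ℕ) : ℤ))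
          = (-(n : ℤ) + (k : ℤ) + ((0:ℕ) : ℤ) - 1) + 2 by push_cast; ring]
    rw [zpow_add₀ hJ, zpow_two]
    have hfac : (((k + 1).factorial : ℕ) : ℂ) = ((k : ℂ) + 1) * ((k.factorial : ℕ) : ℂ) := by
      rw [Nat.factorial_succ]; push_cast; ring
    simp only [Nat.sub_zero, Nat.add_sub_cancel]
    rw [hfac, pow_succ]
    push_cast
    field_simp [fne k, hnk, hk1]
    ring
  · -- T (k+1) = S * Q k
    show (c ^ (k + 1 - (k+1)) * J ^ (-(n : ℤ) + ((k : ℤ) + 1) + ((k+1:ℕ) : ℤ))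
            / ((k + 1 - (k+1)).factorial : ℂ))
          * ((-1 : ℂ) ^ (k+1) * ((n - (k+1)).factorial : ℂ) / (((k+1).factorial : ℕ) : ℂ))
          * D (k+1) = _
    rw [show (-(n : ℤ) + ((k : ℤ) + 1) + ((k+1:ℕ) : ℤ))
          = (-(n : ℤ) + (k : ℤ) + ((k:ℕ) : ℤ)) + 2 by push_cast; ring]
    rw [zpow_add₀ hJ, zpow_two]
    have f1 : (((n - k).factorial : ℕ) : ℂ)
        = ((n : ℂ) - (k : ℂ)) * (((n - (k+1)).factorial : ℕ) : ℂ) := by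
      rw [show n - k = (n - (k+1)) + 1 by omega, Nat.factorial_succ]
      push_cast [Nat.cast_sub (by omega : k + 1 ≤ n)]
      ring
    have f2 : (((k+1).factorial : ℕ) : ℂ) = ((k : ℂ) + 1) * ((k.factorial : ℕ) : ℂ) := by
      rw [Nat.factorial_succ]; push_cast; ring
    simp only [Nat.sub_self, pow_succ, Nat.factorial_zero, Nat.cast_one]
    rw [f1, f2]
    have hsc2 : (J * J) * ((-1 : ℂ) * (((n - (k+1)).factorial : ℕ) : ℂ))
          / (((k : ℂ) + 1) * ((k.factorial : ℕ) : ℂ))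
        = (-(J ^ 2) / (((n : ℂ) - (k : ℂ)) * ((k : ℂ) + 1))) *
            ((((n : ℂ) - (k : ℂ)) * (((n - (k+1)).factorial : ℕ) : ℂ)) / ((k.factorial : ℕ) : ℂ)) := by
      rw [div_mul_div_comm,
        div_eq_div_iff (mul_ne_zero hk1 (fne k))
          (mul_ne_zero (mul_ne_zero hnk hk1) (fne k))]
      ring
    linear_combination ((-1 : ℂ) ^ k * J ^ (-(n : ℤ) + (k : ℤ) + ((k : ℕ) : ℤ)) * D (k+1)) * hsc2
  · -- middle terms
    intro m hm
    show (c ^ (k + 1 - (m+1)) * J ^ (-(n : ℤ) + ((k : ℤ) + 1) + ((m+1:ℕ) : ℤ))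
            / (((k + 1 - (m+1)).factorial : ℕ) : ℂ))
          * ((-1 : ℂ) ^ (m+1) * (((n - (m+1)).factorial : ℕ) : ℂ) / (((m+1).factorial : ℕ) : ℂ))
          * D (m+1) = _
    rw [show (-(n : ℤ) + ((k : ℤ) + 1) + ((m+1:ℕ) : ℤ))
          = (-(n : ℤ) + (k : ℤ) + ((m:ℕ) : ℤ)) + 2 by push_cast; ring]
    rw [show (-(n : ℤ) + (k : ℤ) + ((m+1:ℕ) : ℤ) - 1)
          = (-(n : ℤ) + (k : ℤ) + ((m:ℕ) : ℤ)) by push_cast; ring]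
    rw [zpow_add₀ hJ, zpow_two]
    have h1 : k + 1 - (m+1) = k - m := by omega
    have h2 : c ^ (k - m) = c ^ (k - (m+1)) * c := by
      rw [← pow_succ]; congr 1; omega
    have f1 : (((n - m).factorial : ℕ) : ℂ)
        = ((n : ℂ) - (m : ℂ)) * (((n - (m+1)).factorial : ℕ) : ℂ) := by
      rw [show n - m = (n - (m+1)) + 1 by omega, Nat.factorial_succ]
      push_cast [Nat.cast_sub (by omega : m + 1 ≤ n)]
      ring
    have f2 : (((k - m).factorial : ℕ) : ℂ)
        = ((k : ℂ) - (m : ℂ)) * (((k - (m+1)).factorial : ℕ) : ℂ) := by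
      rw [show k - m = (k - (m+1)) + 1 by omega, Nat.factorial_succ]
      push_cast [Nat.cast_sub (by omega : m + 1 ≤ k)]
      ring
    have f3 : (((m+1).factorial : ℕ) : ℂ) = ((m : ℂ) + 1) * ((m.factorial : ℕ) : ℂ) := by
      rw [Nat.factorial_succ]; push_cast; ring
    have hnm : ((n : ℂ) - (m : ℂ)) ≠ 0 := by
      have h : ((n - m : ℕ) : ℂ) ≠ 0 := Nat.cast_ne_zero.mpr (by omega)
      rwa [Nat.cast_sub (by omega)] at h
    have hkm : ((k : ℂ) - (m : ℂ)) ≠ 0 := by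
      have h : ((k - m : ℕ) : ℂ) ≠ 0 := Nat.cast_ne_zero.mpr (by omega)
      rwa [Nat.cast_sub (by omega)] at h
    have hm1 : ((m : ℂ) + 1) ≠ 0 := Nat.cast_add_one_ne_zero m
    have hsc3 : (J * J) / (((k : ℂ) - (m : ℂ)) * (((k - (m+1)).factorial : ℕ) : ℂ))
            * ((-1 : ℂ) / (((m : ℂ) + 1) * ((m.factorial : ℕ) : ℂ)))
        = -(J ^ 2) / (((n : ℂ) - (k : ℂ)) * ((k : ℂ) + 1)) *
          (((-(n : ℂ) + (k : ℂ) + ((m : ℂ) + 1)) * (-1)) / (((k - (m+1)).factorial : ℕ) : ℂ)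
              * ((1 : ℂ) / (((m : ℂ) + 1) * ((m.factorial : ℕ) : ℂ)))
            + ((n : ℂ) - (m : ℂ)) / (((k : ℂ) - (m : ℂ)) * (((k - (m+1)).factorial : ℕ) : ℂ))
              * ((1 : ℂ) / ((m.factorial : ℕ) : ℂ))) := by
      simp only [div_mul_div_comm]
      rw [div_add_div _ _ (mul_ne_zero (fne (k - (m+1))) (mul_ne_zero hm1 (fne m)))
            (mul_ne_zero (mul_ne_zero hkm (fne (k - (m+1)))) (fne m)),
          div_mul_div_comm,
          div_eq_div_iff
            (mul_ne_zero (mul_ne_zero hkm (fne (k - (m+1)))) (mul_ne_zero hm1 (fne m)))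
            (mul_ne_zero (mul_ne_zero hnk hk1)
              (mul_ne_zero (mul_ne_zero (fne (k - (m+1))) (mul_ne_zero hm1 (fne m)))
                (mul_ne_zero (mul_ne_zero hkm (fne (k - (m+1)))) (fne m))))]
      ring
    rw [h1, h2, f1, f2, f3]
    simp only [pow_succ]
    push_cast
    linear_combination (c ^ (k - (m+1)) * c * J ^ (-(n : ℤ) + (k : ℤ) + ((m : ℕ) : ℤ))
      * (-1 : ℂ) ^ m * (((n - (m+1)).factorial : ℕ) : ℂ) * D (m+1)) * hsc3

/-- derivative transformation for weakly modular functions of weight `−n`. -/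
theorem deriv_transform_neg_weight (n : ℕ) (g : Matrix.SpecialLinearGroup (Fin 2) ℝ)
    (f : ℂ → ℂ) (hf : HoloOnH f)
    (hmod : ∀ τ : ℂ, 0 < τ.im →
      f (moebR g τ) = ((g 1 0 : ℂ) * τ + (g 1 1 : ℂ)) ^ (-(n : ℤ)) * f τ) :
    ∀ k : ℕ, k ≤ n → ∀ τ : ℂ, 0 < τ.im →
      ((-1 : ℂ) ^ k * ((n - k).factorial : ℂ) / (k.factorial : ℂ))
          * iteratedDeriv k f (moebR g τ)
        = ∑ m ∈ Finset.range (k + 1),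
            ((g 1 0 : ℂ) ^ (k - m)
                * ((g 1 0 : ℂ) * τ + (g 1 1 : ℂ)) ^ (-(n : ℤ) + (k : ℤ) + (m : ℤ))
                / ((k - m).factorial : ℂ))
              * ((-1 : ℂ) ^ m * ((n - m).factorial : ℂ) / (m.factorial : ℂ))
              * iteratedDeriv m f τ := by
  have hU : IsOpen {z : ℂ | 0 < z.im} := isOpen_lt continuous_const Complex.continuous_im
  have han : AnalyticOnNhd ℂ f {z : ℂ | 0 < z.im} :=
    DifferentiableOn.analyticOnNhd (fun z hz => (hf z hz).differentiableWithinAt) hU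
  have hIt : ∀ m : ℕ, ∀ σ : ℂ, 0 < σ.im →
      HasDerivAt (iteratedDeriv m f) (iteratedDeriv (m + 1) f σ) σ := by
    intro m σ hσ
    rw [iteratedDeriv_succ]
    simpa [iteratedDeriv_eq_iterate] using
      (((han.iterated_deriv m) σ hσ).differentiableAt).hasDerivAt
  intro k
  induction k with
  | zero =>
    intro _ τ hτ
    rw [iteratedDeriv_zero, hmod τ hτ]
    simp [Finset.sum_range_one]
    ring
  | succ k ih =>
    intro hk1 τ hτ
    have hkn : k < n := hk1
    have hJ : (g 1 0 : ℂ) * τ + (g 1 1 : ℂ) ≠ 0 := denom_ne g τ hτ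
    have fne : ∀ m : ℕ, ((m.factorial : ℕ) : ℂ) ≠ 0 :=
      fun m => Nat.cast_ne_zero.mpr (Nat.factorial_ne_zero m)
    have hnk : ((n : ℂ) - (k : ℂ)) ≠ 0 := by
      have h : ((n - k : ℕ) : ℂ) ≠ 0 := Nat.cast_ne_zero.mpr (by omega)
      rwa [Nat.cast_sub hkn.le] at h
    have hk1' : ((k : ℂ) + 1) ≠ 0 := Nat.cast_add_one_ne_zero k
    -- derivative of the left-hand side of the induction hypothesis
    have hF : HasDerivAt
        (fun σ : ℂ => ((-1 : ℂ) ^ k * ((n - k).factorial : ℂ) / (k.factorial : ℂ))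
          * iteratedDeriv k f (moebR g σ))
        (((-1 : ℂ) ^ k * ((n - k).factorial : ℂ) / (k.factorial : ℂ))
          * (iteratedDeriv (k + 1) f (moebR g τ)
              * (1 / ((g 1 0 : ℂ) * τ + (g 1 1 : ℂ)) ^ 2))) τ := by
      exact (((hIt k (moebR g τ) (im_moebR g τ hτ)).comp τ
        (moebR_hasDerivAt g τ hτ))).const_mul _
    -- derivative of the right-hand side of the induction hypothesis
    have hG : HasDerivAt
        (fun σ : ℂ => ∑ m ∈ Finset.range (k + 1),
          ((g 1 0 : ℂ) ^ (k - m)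
              * ((g 1 0 : ℂ) * σ + (g 1 1 : ℂ)) ^ (-(n : ℤ) + (k : ℤ) + (m : ℤ))
              / ((k - m).factorial : ℂ))
            * ((-1 : ℂ) ^ m * ((n - m).factorial : ℂ) / (m.factorial : ℂ))
            * iteratedDeriv m f σ)
        (∑ m ∈ Finset.range (k + 1),
          (((g 1 0 : ℂ) ^ (k - m) * (((-(n : ℤ) + (k : ℤ) + (m : ℤ) : ℤ) : ℂ)
                * ((g 1 0 : ℂ) * τ + (g 1 1 : ℂ)) ^ (-(n : ℤ) + (k : ℤ) + (m : ℤ) - 1)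
                * (g 1 0 : ℂ)) / ((k - m).factorial : ℂ))
              * ((-1 : ℂ) ^ m * ((n - m).factorial : ℂ) / (m.factorial : ℂ))
              * iteratedDeriv m f τ
            + ((g 1 0 : ℂ) ^ (k - m)
                * ((g 1 0 : ℂ) * τ + (g 1 1 : ℂ)) ^ (-(n : ℤ) + (k : ℤ) + (m : ℤ))
                / ((k - m).factorial : ℂ))
              * ((-1 : ℂ) ^ m * ((n - m).factorial : ℂ) / (m.factorial : ℂ))
              * iteratedDeriv (m + 1) f τ)) τ := by
      refine HasDerivAt.fun_sum fun m _ => ?_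
      have haff : HasDerivAt (fun σ : ℂ => (g 1 0 : ℂ) * σ + (g 1 1 : ℂ)) ((g 1 0 : ℂ)) τ := by
        simpa using ((hasDerivAt_id τ).const_mul ((g 1 0 : ℂ))).add_const ((g 1 1 : ℂ))
      have hz : HasDerivAt
          (fun σ : ℂ => ((g 1 0 : ℂ) * σ + (g 1 1 : ℂ)) ^ (-(n : ℤ) + (k : ℤ) + (m : ℤ)))
          ((((-(n : ℤ) + (k : ℤ) + (m : ℤ) : ℤ)) : ℂ)
            * ((g 1 0 : ℂ) * τ + (g 1 1 : ℂ)) ^ (-(n : ℤ) + (k : ℤ) + (m : ℤ) - 1)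
            * (g 1 0 : ℂ)) τ := by
        exact
          (hasDerivAt_zpow (-(n : ℤ) + (k : ℤ) + (m : ℤ)) _ (Or.inl hJ)).comp τ haff
      exact (((hz.const_mul ((g 1 0 : ℂ) ^ (k - m))).div_const _).mul_const _).mul (hIt m τ hτ)
    have hEq : deriv (fun σ : ℂ => ((-1 : ℂ) ^ k * ((n - k).factorial : ℂ) / (k.factorial : ℂ))
          * iteratedDeriv k f (moebR g σ)) τ
        = deriv (fun σ : ℂ => ∑ m ∈ Finset.range (k + 1),
          ((g 1 0 : ℂ) ^ (k - m)
              * ((g 1 0 : ℂ) * σ + (g 1 1 : ℂ)) ^ (-(n : ℤ) + (k : ℤ) + (m : ℤ))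
              / ((k - m).factorial : ℂ))
            * ((-1 : ℂ) ^ m * ((n - m).factorial : ℂ) / (m.factorial : ℂ))
            * iteratedDeriv m f σ) τ := by
      apply Filter.EventuallyEq.deriv_eq
      filter_upwards [hU.mem_nhds (show τ ∈ {z : ℂ | 0 < z.im} from hτ)] with σ hσ
      exact ih hkn.le σ hσ
    rw [hF.deriv, hG.deriv] at hEq
    -- rewrite the goal's sum using key_sum
    have hkey := key_sum n k hkn ((g 1 0 : ℂ)) ((g 1 0 : ℂ) * τ + (g 1 1 : ℂ)) hJ
      (fun m => iteratedDeriv m f τ)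
    beta_reduce at hkey
    simp only [Nat.cast_add, Nat.cast_one]
    rw [hkey, ← hEq]
    -- final algebraic manipulation
    have f1 : (((n - k).factorial : ℕ) : ℂ)
        = ((n : ℂ) - (k : ℂ)) * (((n - (k + 1)).factorial : ℕ) : ℂ) := by
      rw [show n - k = (n - (k + 1)) + 1 by omega, Nat.factorial_succ]
      push_cast [Nat.cast_sub (by omega : k + 1 ≤ n)]
      ring
    have f2 : ((((k + 1)).factorial : ℕ) : ℂ) = ((k : ℂ) + 1) * ((k.factorial : ℕ) : ℂ) := by
      rw [Nat.factorial_succ]; push_cast; ring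
    rw [pow_succ, f1, f2]
    have hsc : ((-1 : ℂ) ^ k * -1
          * (((n - (k + 1)).factorial : ℕ) : ℂ) / (((k : ℂ) + 1) * ((k.factorial : ℕ) : ℂ)))
        = -(((g 1 0 : ℂ) * τ + (g 1 1 : ℂ)) ^ 2) / (((n : ℂ) - (k : ℂ)) * ((k : ℂ) + 1)) *
          ((-1 : ℂ) ^ k * (((n : ℂ) - (k : ℂ)) * (((n - (k + 1)).factorial : ℕ) : ℂ))
              / ((k.factorial : ℕ) : ℂ)
            * (1 / ((g 1 0 : ℂ) * τ + (g 1 1 : ℂ)) ^ 2)) := by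
      simp only [div_mul_div_comm]
      rw [div_eq_div_iff (mul_ne_zero hk1' (fne k))
        (mul_ne_zero (mul_ne_zero hnk hk1')
          (mul_ne_zero (fne k) (pow_ne_zero 2 hJ)))]
      ring
    linear_combination (iteratedDeriv (k + 1) f (moebR g τ)) * hsc
end

section
/- (Bol's identity) Let n ≥ 0 be an integer, let g = ((α,β),(γ,δ)) ∈ SL(2,ℝ), and let f be a holomorphic function on ℍ that is weakly modular of weight −n for g. Then the (n+1)-st derivative f^{(n+1)} is weakly modular of weight n+2 for g; that is, f^{(n+1)}(gτ) = (γτ+δ)^{n+2}·f^{(n+1)}(τ) for all τ ∈ ℍ. -/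
open Complex Finset

section BolAux


noncomputable def bolC (n k i : ℕ) : ℂ :=
  (k.choose i : ℂ) * ∏ m ∈ Finset.Ico i k, ((n : ℂ) - (m : ℂ))

lemma bolC_self (n k : ℕ) : bolC n k k = 1 := by simp [bolC]

lemma bolC_of_lt (n : ℕ) {k i : ℕ} (h : k < i) : bolC n k i = 0 := by
  simp [bolC, Nat.choose_eq_zero_of_lt h]

lemma bolC_zero_of_le (n : ℕ) {i : ℕ} (h : i ≤ n) : bolC n (n + 1) i = 0 := by
  have hm : n ∈ Finset.Ico i (n + 1) := by simp [Finset.mem_Ico]; omega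
  rw [bolC, Finset.prod_eq_zero hm (by ring)] ; ring

lemma bolC_rec (n k i : ℕ) :
    bolC n (k + 1) i
      = ((n : ℂ) - k - i) * bolC n k i + (if i = 0 then 0 else bolC n k (i - 1)) := by
  cases i with
  | zero =>
      rw [if_pos rfl, add_zero, bolC, bolC, Finset.prod_Ico_succ_top (Nat.zero_le k)]
      simp only [Nat.choose_zero_right, Nat.cast_one, one_mul, Nat.cast_zero, sub_zero]
      ring
  | succ i =>
      simp only [if_neg (Nat.succ_ne_zero i), Nat.succ_sub_one]
      rcases lt_or_ge i k with hik | hik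
      · rw [bolC, bolC, bolC, Finset.prod_Ico_succ_top (by omega : i + 1 ≤ k),
          Finset.prod_eq_prod_Ico_succ_bot (by omega : i < k)]
        have hc : (k.choose (i+1) : ℂ) * (i+1) = (k.choose i : ℂ) * ((k : ℂ) - i) := by
          have h := Nat.choose_succ_right_eq k i
          have h2 : ((k.choose (i+1) * (i+1) : ℕ) : ℂ) = ((k.choose i * (k - i) : ℕ) : ℂ) := by
            exact_mod_cast congrArg Nat.cast h
          push_cast [Nat.cast_sub hik.le] at h2
          convert h2 using 2 <;> push_cast <;> ring
        rw [Nat.choose_succ_succ (k) (i)]  -- (k+1).choose (i+1) = k.choose i + k.choose (i+1)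
        push_cast
        linear_combination (∏ m ∈ Finset.Ico (i+1) k, ((n:ℂ) - m)) * hc
      · rcases eq_or_lt_of_le hik with h | h
        · subst h
          rw [bolC_self, bolC_self, bolC_of_lt n (by omega : k < k + 1)]
          ring
        · rw [bolC_of_lt n (by omega : k + 1 < i + 1), bolC_of_lt n (by omega : k < i + 1),
            bolC_of_lt n h]
          ring

section
variable (n : ℕ) (a b c d : ℝ)

lemma bol_j_ne (hdet : a * d - b * c = 1) {t : ℂ} (ht : 0 < t.im) :
    (c : ℂ) * t + d ≠ 0 := by
  intro h0
  have him : ((c : ℂ) * t + d).im = c * t.im := by simp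
  have hre : ((c : ℂ) * t + d).re = c * t.re + d := by simp
  rw [h0] at him hre
  have hc : c = 0 := by
    rcases mul_eq_zero.mp him.symm with h | h
    · exact h
    · exact absurd h ht.ne'
  have hd : d = 0 := by
    rw [hc] at hre; simpa using hre.symm
  rw [hc, hd] at hdet; simpa using hdet

lemma bol_im_pos (hdet : a * d - b * c = 1) {t : ℂ} (ht : 0 < t.im) :
    0 < (((a : ℂ) * t + b) / ((c : ℂ) * t + d)).im := by
  have hne := bol_j_ne a b c d hdet ht
  have hN : 0 < Complex.normSq ((c : ℂ) * t + d) := Complex.normSq_pos.mpr hne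
  have : (((a : ℂ) * t + b) / ((c : ℂ) * t + d)).im
      = t.im / Complex.normSq ((c : ℂ) * t + d) := by
    rw [Complex.div_im]
    rw [div_sub_div_same]
    congr 1
    simp [Complex.add_im, Complex.add_re, Complex.mul_im, Complex.mul_re]
    ring_nf
    nlinarith [hdet]
  rw [this]
  positivity

lemma bol_sigma_deriv (hdet : a * d - b * c = 1) {t : ℂ} (ht : 0 < t.im) :
    HasDerivAt (fun x : ℂ => ((a : ℂ) * x + b) / ((c : ℂ) * x + d))
      (((c : ℂ) * t + d) ^ (-2 : ℤ)) t := by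
  have hne := bol_j_ne a b c d hdet ht
  have h1 : HasDerivAt (fun x : ℂ => (a : ℂ) * x + b) (a : ℂ) t := by
    simpa using ((hasDerivAt_id t).const_mul ((a : ℝ) : ℂ)).add_const ((b : ℝ) : ℂ)
  have h2 : HasDerivAt (fun x : ℂ => (c : ℂ) * x + d) (c : ℂ) t := by
    simpa using ((hasDerivAt_id t).const_mul ((c : ℝ) : ℂ)).add_const ((d : ℝ) : ℂ)
  have h3 := h1.fun_div h2 hne
  refine h3.congr_deriv ?_
  have hdetC : (a : ℂ) * d - b * c = 1 := by exact_mod_cast congrArg Complex.ofReal hdet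
  have hnum : (a:ℂ) * ((c:ℂ)*t+d) - ((a:ℂ)*t + b) * c = 1 := by linear_combination hdetC
  rw [hnum, zpow_neg, one_div]
  norm_cast

end



section
variable (f : ℂ → ℂ)

lemma bol_analytic (hf : ∀ τ : ℂ, 0 < τ.im → DifferentiableAt ℂ f τ) (i : ℕ) :
    AnalyticOnNhd ℂ (iteratedDeriv i f) {z : ℂ | 0 < z.im} := by
  have hS : IsOpen {z : ℂ | 0 < z.im} := isOpen_lt continuous_const Complex.continuous_im
  induction i with
  | zero =>
      simp only [iteratedDeriv_zero]
      have hd : DifferentiableOn ℂ f {z : ℂ | 0 < z.im} :=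
        fun z hz => (hf z hz).differentiableWithinAt
      exact hd.analyticOnNhd hS
  | succ i ih =>
      rw [iteratedDeriv_succ]
      exact ih.deriv

lemma bol_iter_hasDerivAt (hf : ∀ τ : ℂ, 0 < τ.im → DifferentiableAt ℂ f τ) (i : ℕ)
    {t : ℂ} (ht : 0 < t.im) :
    HasDerivAt (iteratedDeriv i f) (iteratedDeriv (i + 1) f t) t := by
  rw [iteratedDeriv_succ]
  exact ((bol_analytic f hf i t ht).differentiableAt).hasDerivAt

end

lemma bol_key (n : ℕ) (a b c d : ℝ) (hdet : a * d - b * c = 1) (f : ℂ → ℂ)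
    (hf : ∀ τ : ℂ, 0 < τ.im → DifferentiableAt ℂ f τ)
    (hmod : ∀ τ : ℂ, 0 < τ.im →
      f (((a : ℂ) * τ + b) / ((c : ℂ) * τ + d)) = ((c : ℂ) * τ + d) ^ (-(n : ℤ)) * f τ) :
    ∀ k : ℕ, ∀ τ : ℂ, 0 < τ.im →
      iteratedDeriv k f τ = ∑ i ∈ Finset.range (k + 1),
        bolC n k i * (c : ℂ) ^ (k - i) * (((c : ℂ) * τ + d) ^ ((n : ℤ) - k - i) *
          iteratedDeriv i f (((a : ℂ) * τ + b) / ((c : ℂ) * τ + d))) := by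
  have hS : IsOpen {z : ℂ | 0 < z.im} := isOpen_lt continuous_const Complex.continuous_im
  intro k
  induction k with
  | zero =>
      intro τ hτ
      have hne := bol_j_ne a b c d hdet hτ
      simp only [zero_add, Finset.sum_range_one, iteratedDeriv_zero, bolC,
        Nat.choose_self, Finset.Ico_self, Finset.prod_empty, Nat.cast_one, one_mul,
        Nat.cast_zero, sub_zero, pow_zero, Nat.sub_zero, mul_one]
      rw [hmod τ hτ, ← mul_assoc, ← zpow_add₀ hne]
      simp
  | succ k ih =>
      intro τ hτ
      have hne := bol_j_ne a b c d hdet hτ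
      have himτ : 0 < (((a : ℂ) * τ + b) / ((c : ℂ) * τ + d)).im := bol_im_pos a b c d hdet hτ
      -- step 1: replace iterated deriv by deriv of previous formula
      have hev : iteratedDeriv k f =ᶠ[nhds τ] (fun t => ∑ i ∈ Finset.range (k + 1),
          bolC n k i * (c : ℂ) ^ (k - i) * (((c : ℂ) * t + d) ^ ((n : ℤ) - k - i) *
            iteratedDeriv i f (((a : ℂ) * t + b) / ((c : ℂ) * t + d)))) := by
        filter_upwards [hS.mem_nhds hτ] with t ht using ih t ht
      rw [iteratedDeriv_succ, hev.deriv_eq]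
      -- step 2: compute the derivative of the sum
      have hterm : ∀ i ∈ Finset.range (k + 1), HasDerivAt
          (fun t => bolC n k i * (c : ℂ) ^ (k - i) * (((c : ℂ) * t + d) ^ ((n : ℤ) - k - i) *
            iteratedDeriv i f (((a : ℂ) * t + b) / ((c : ℂ) * t + d))))
          (bolC n k i * (c : ℂ) ^ (k - i) *
            ((((n : ℤ) - k - i : ℤ) : ℂ) * ((c : ℂ) * τ + d) ^ (((n : ℤ) - k - i) - 1) * (c : ℂ) *
                iteratedDeriv i f (((a : ℂ) * τ + b) / ((c : ℂ) * τ + d)) +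
              ((c : ℂ) * τ + d) ^ ((n : ℤ) - k - i) *
                (iteratedDeriv (i + 1) f (((a : ℂ) * τ + b) / ((c : ℂ) * τ + d)) * ((c : ℂ) * τ + d) ^ (-2 : ℤ)))) τ := by
        intro i _
        have hj' : HasDerivAt (fun x : ℂ => (c : ℂ) * x + d) (c : ℂ) τ := by
          simpa using ((hasDerivAt_id τ).const_mul ((c : ℝ) : ℂ)).add_const ((d : ℝ) : ℂ)
        have hz : HasDerivAt (fun t : ℂ => ((c : ℂ) * t + d) ^ ((n : ℤ) - k - i))
            ((((n : ℤ) - k - i : ℤ) : ℂ) * ((c : ℂ) * τ + d) ^ (((n : ℤ) - k - i) - 1) * (c : ℂ)) τ :=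
          by simpa [Function.comp_def] using
            (hasDerivAt_zpow ((n : ℤ) - k - i) _ (Or.inl hne)).comp τ hj'
        have hcomp : HasDerivAt (fun t => iteratedDeriv i f (((a : ℂ) * t + b) / ((c : ℂ) * t + d)))
            (iteratedDeriv (i + 1) f (((a : ℂ) * τ + b) / ((c : ℂ) * τ + d)) * ((c : ℂ) * τ + d) ^ (-2 : ℤ)) τ :=
          by simpa [Function.comp_def] using
            (bol_iter_hasDerivAt f hf i himτ).comp τ (bol_sigma_deriv a b c d hdet hτ)
        exact (hz.mul hcomp).const_mul _
      rw [(HasDerivAt.fun_sum hterm).deriv]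
      -- step 3: sum manipulation
      have hL : ∑ i ∈ Finset.range (k + 1),
          (bolC n k i * (c : ℂ) ^ (k - i) *
            ((((n : ℤ) - k - i : ℤ) : ℂ) * ((c : ℂ) * τ + d) ^ (((n : ℤ) - k - i) - 1) * (c : ℂ) *
                iteratedDeriv i f (((a : ℂ) * τ + b) / ((c : ℂ) * τ + d)) +
              ((c : ℂ) * τ + d) ^ ((n : ℤ) - k - i) *
                (iteratedDeriv (i + 1) f (((a : ℂ) * τ + b) / ((c : ℂ) * τ + d)) * ((c : ℂ) * τ + d) ^ (-2 : ℤ))))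
          = (∑ i ∈ Finset.range (k + 1),
          ((n : ℂ) - k - i) * bolC n k i * (c : ℂ) ^ (k + 1 - i) *
              (((c : ℂ) * τ + d) ^ ((n : ℤ) - (k + 1 : ℕ) - i) * iteratedDeriv i f (((a : ℂ) * τ + b) / ((c : ℂ) * τ + d))))
          + ∑ i ∈ Finset.range (k + 1),
            bolC n k i * (c : ℂ) ^ (k - i) *
              (((c : ℂ) * τ + d) ^ ((n : ℤ) - (k + 1 : ℕ) - (i + 1 : ℕ)) *
                iteratedDeriv (i + 1) f (((a : ℂ) * τ + b) / ((c : ℂ) * τ + d))) := by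
        rw [← Finset.sum_add_distrib]
        refine Finset.sum_congr rfl fun i hi => ?_
        have hik : i ≤ k := Nat.lt_succ_iff.mp (Finset.mem_range.mp hi)
        have hp : (c : ℂ) ^ (k + 1 - i) = (c : ℂ) ^ (k - i) * c := by
          rw [← pow_succ]; congr 1; omega
        have hz1 : ((c : ℂ) * τ + d) ^ (((n : ℤ) - k - i) - 1)
            = ((c : ℂ) * τ + d) ^ ((n : ℤ) - (k + 1 : ℕ) - i) := by
          congr 1; push_cast; ring
        have hz2 : ((c : ℂ) * τ + d) ^ ((n : ℤ) - k - i) * ((c : ℂ) * τ + d) ^ (-2 : ℤ)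
            = ((c : ℂ) * τ + d) ^ ((n : ℤ) - (k + 1 : ℕ) - (i + 1 : ℕ)) := by
          rw [← zpow_add₀ hne]; congr 1; push_cast; ring
        rw [hp, ← hz1, ← hz2]
        push_cast
        ring
      rw [hL]
      have h1 : ∑ i ∈ Finset.range (k + 1 + 1),
          ((n : ℂ) - k - i) * bolC n k i * (c : ℂ) ^ (k + 1 - i) *
            (((c : ℂ) * τ + d) ^ ((n : ℤ) - (k + 1 : ℕ) - i) * iteratedDeriv i f (((a : ℂ) * τ + b) / ((c : ℂ) * τ + d)))
          = ∑ i ∈ Finset.range (k + 1),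
          ((n : ℂ) - k - i) * bolC n k i * (c : ℂ) ^ (k + 1 - i) *
            (((c : ℂ) * τ + d) ^ ((n : ℤ) - (k + 1 : ℕ) - i) * iteratedDeriv i f (((a : ℂ) * τ + b) / ((c : ℂ) * τ + d))) := by
        rw [Finset.sum_range_succ, bolC_of_lt n (Nat.lt_succ_self k)]
        simp only [mul_zero, zero_mul, add_zero]
      have h2 : ∑ i ∈ Finset.range (k + 1 + 1),
          (if i = 0 then 0 else bolC n k (i - 1)) * (c : ℂ) ^ (k + 1 - i) *
            (((c : ℂ) * τ + d) ^ ((n : ℤ) - (k + 1 : ℕ) - i) * iteratedDeriv i f (((a : ℂ) * τ + b) / ((c : ℂ) * τ + d)))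
          = ∑ i ∈ Finset.range (k + 1),
          bolC n k i * (c : ℂ) ^ (k - i) *
            (((c : ℂ) * τ + d) ^ ((n : ℤ) - (k + 1 : ℕ) - (i + 1 : ℕ)) *
              iteratedDeriv (i + 1) f (((a : ℂ) * τ + b) / ((c : ℂ) * τ + d))) := by
        rw [Finset.sum_range_succ']
        simp [Nat.succ_sub_succ]
      have hT : ∑ i ∈ Finset.range (k + 1 + 1),
          bolC n (k + 1) i * (c : ℂ) ^ (k + 1 - i) *
            (((c : ℂ) * τ + d) ^ ((n : ℤ) - (k + 1 : ℕ) - i) *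
              iteratedDeriv i f (((a : ℂ) * τ + b) / ((c : ℂ) * τ + d)))
          = (∑ i ∈ Finset.range (k + 1 + 1),
          ((n : ℂ) - k - i) * bolC n k i * (c : ℂ) ^ (k + 1 - i) *
              (((c : ℂ) * τ + d) ^ ((n : ℤ) - (k + 1 : ℕ) - i) * iteratedDeriv i f (((a : ℂ) * τ + b) / ((c : ℂ) * τ + d))))
          + ∑ i ∈ Finset.range (k + 1 + 1),
            (if i = 0 then 0 else bolC n k (i - 1)) * (c : ℂ) ^ (k + 1 - i) *
              (((c : ℂ) * τ + d) ^ ((n : ℤ) - (k + 1 : ℕ) - i) *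
                iteratedDeriv i f (((a : ℂ) * τ + b) / ((c : ℂ) * τ + d))) := by
        rw [← Finset.sum_add_distrib]
        refine Finset.sum_congr rfl fun i _ => ?_
        rw [bolC_rec]
        ring
      rw [hT, h1, h2]

theorem bol_identity' (n : ℕ) (g : Matrix.SpecialLinearGroup (Fin 2) ℝ)
    (f : ℂ → ℂ) (hf : ∀ τ : ℂ, 0 < τ.im → DifferentiableAt ℂ f τ)
    (hmod : ∀ τ : ℂ, 0 < τ.im →
      f (((g 0 0 : ℂ) * τ + (g 0 1 : ℂ)) / ((g 1 0 : ℂ) * τ + (g 1 1 : ℂ)))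
        = ((g 1 0 : ℂ) * τ + (g 1 1 : ℂ)) ^ (-(n : ℤ)) * f τ) :
    ∀ τ : ℂ, 0 < τ.im →
      iteratedDeriv (n + 1) f (((g 0 0 : ℂ) * τ + (g 0 1 : ℂ)) / ((g 1 0 : ℂ) * τ + (g 1 1 : ℂ)))
        = ((g 1 0 : ℂ) * τ + (g 1 1 : ℂ)) ^ (n + 2) * iteratedDeriv (n + 1) f τ := by
  intro τ hτ
  have hdet : (g 0 0 : ℝ) * g 1 1 - g 0 1 * g 1 0 = 1 := by
    have h := g.2
    rw [Matrix.det_fin_two] at h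
    exact h
  have hne := bol_j_ne (g 0 0) (g 0 1) (g 1 0) (g 1 1) hdet hτ
  have hkey := bol_key n (g 0 0) (g 0 1) (g 1 0) (g 1 1) hdet f hf hmod (n + 1) τ hτ
  have hsum : ∑ i ∈ Finset.range (n + 1 + 1),
      bolC n (n + 1) i * ((g 1 0 : ℝ) : ℂ) ^ (n + 1 - i) *
        (((g 1 0 : ℂ) * τ + (g 1 1 : ℂ)) ^ ((n : ℤ) - (n + 1 : ℕ) - i) *
          iteratedDeriv i f (((g 0 0 : ℂ) * τ + (g 0 1 : ℂ)) / ((g 1 0 : ℂ) * τ + (g 1 1 : ℂ))))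
      = ((g 1 0 : ℂ) * τ + (g 1 1 : ℂ)) ^ (-((n : ℤ) + 2)) *
          iteratedDeriv (n + 1) f
            (((g 0 0 : ℂ) * τ + (g 0 1 : ℂ)) / ((g 1 0 : ℂ) * τ + (g 1 1 : ℂ))) := by
    rw [Finset.sum_range_succ, Finset.sum_eq_zero (fun i hi => by
      rw [bolC_zero_of_le n (Nat.lt_succ_iff.mp (Finset.mem_range.mp hi))]; ring), zero_add,
      bolC_self, Nat.sub_self, pow_zero, one_mul, one_mul]
    rw [show (n : ℤ) - ((n + 1 : ℕ) : ℤ) - ((n + 1 : ℕ) : ℤ) = -((n : ℤ) + 2) by push_cast; ring]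
  rw [hsum] at hkey
  rw [hkey, ← mul_assoc, ← zpow_natCast ((g 1 0 : ℂ) * τ + (g 1 1 : ℂ)) (n + 2),
    ← zpow_add₀ hne, show ((n + 2 : ℕ) : ℤ) + -((n : ℤ) + 2) = 0 by push_cast; ring,
    zpow_zero, one_mul]

end BolAux

/-- Bol's identity: if `f` is holomorphic on `ℍ` and weakly modular of
weight `−n` for `g ∈ SL(2,ℝ)`, then `f^{(n+1)}` is weakly modular of weight `n+2` for `g`. -/
theorem bol_identity (n : ℕ) (g : Matrix.SpecialLinearGroup (Fin 2) ℝ)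
    (f : ℂ → ℂ) (hf : HoloOnH f)
    (hmod : ∀ τ : ℂ, 0 < τ.im →
      f (moebR g τ) = ((g 1 0 : ℂ) * τ + (g 1 1 : ℂ)) ^ (-(n : ℤ)) * f τ) :
    ∀ τ : ℂ, 0 < τ.im →
      iteratedDeriv (n + 1) f (moebR g τ)
        = ((g 1 0 : ℂ) * τ + (g 1 1 : ℂ)) ^ (n + 2) * iteratedDeriv (n + 1) f τ := by
  exact bol_identity' n g f hf hmod
end

section
/- Let n ≥ 0 be an integer and let f be a holomorphic function on ℍ. Then for every integer k ≥ 0 and all τ ∈ ℍ: (h^f_k)′(τ) = (2n+k+2)·(k+1)·h^f_{k+1}(τ) + (πi/(6·(2n)!·k!·(k+1)!))·f^{(2n+1)}(τ)·E₂^{(k)}(τ). -/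
open Complex Finset

lemma E2_diffOn : DifferentiableOn ℂ E2 {τ : ℂ | 0 < τ.im} := by
  intro τ0 hτ0
  simp only [Set.mem_setOf_eq] at hτ0
  apply DifferentiableAt.differentiableWithinAt
  set U : Set ℂ := {τ : ℂ | τ0.im / 2 < τ.im} with hUdef
  have hU : IsOpen U := isOpen_lt continuous_const Complex.continuous_im
  have hmem : τ0 ∈ U := by simp only [hUdef, Set.mem_setOf_eq]; linarith
  set r : ℝ := Real.exp (-Real.pi * τ0.im) with hrdef
  have hr0 : 0 ≤ r := Real.exp_nonneg _
  have hr1 : r < 1 := by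
    apply Real.exp_lt_one_iff.mpr
    have := Real.pi_pos
    nlinarith
  have hsum : Summable (fun i : ℕ => ((i : ℝ) + 1) ^ 2 * r ^ (i + 1)) := by
    have h := summable_pow_mul_geometric_of_norm_lt_one (R := ℝ) 2
      (r := r) (by rwa [Real.norm_eq_abs, _root_.abs_of_nonneg hr0])
    have h2 := (summable_nat_add_iff 1).2 h
    apply h2.congr
    intro i
    push_cast
    ring
  have key : DifferentiableOn ℂ
      (fun τ => ∑' i : ℕ, (∑ d ∈ Nat.divisors (i + 1), (d : ℂ)) *
        Complex.exp (2 * (Real.pi : ℂ) * I * τ) ^ (i + 1)) U := by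
    apply differentiableOn_tsum_of_summable_norm hsum _ hU
    · intro i w hw
      simp only [hUdef, Set.mem_setOf_eq] at hw
      rw [norm_mul, norm_pow]
      have h1 : ‖(∑ d ∈ Nat.divisors (i + 1), (d : ℂ))‖ ≤ ((i : ℝ) + 1) ^ 2 := by
        have hnat : (∑ d ∈ Nat.divisors (i + 1), d) ≤ (i + 1) * (i + 1) := by
          calc (∑ d ∈ Nat.divisors (i + 1), d)
              ≤ ∑ _d ∈ Nat.divisors (i + 1), (i + 1) := by
                apply Finset.sum_le_sum
                intro d hd
                exact Nat.le_of_dvd (Nat.succ_pos i) (Nat.mem_divisors.mp hd).1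
            _ = (Nat.divisors (i + 1)).card * (i + 1) := by rw [Finset.sum_const, smul_eq_mul]
            _ ≤ (i + 1) * (i + 1) := by
                apply Nat.mul_le_mul_right
                have hsub : Nat.divisors (i + 1) ⊆ Finset.Icc 1 (i + 1) := by
                  intro d hd
                  rw [Finset.mem_Icc]
                  exact ⟨Nat.pos_of_mem_divisors hd, Nat.divisor_le hd⟩
                calc (Nat.divisors (i + 1)).card ≤ (Finset.Icc 1 (i + 1)).card :=
                      Finset.card_le_card hsub
                  _ = i + 1 := by rw [Nat.card_Icc]; omega
        have hcast : (∑ d ∈ Nat.divisors (i + 1), (d : ℂ))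
            = ((∑ d ∈ Nat.divisors (i + 1), d : ℕ) : ℂ) := by push_cast; rfl
        rw [hcast, Complex.norm_natCast]
        calc ((∑ d ∈ Nat.divisors (i + 1), d : ℕ) : ℝ) ≤ (((i + 1) * (i + 1) : ℕ) : ℝ) := by
              exact_mod_cast hnat
          _ = ((i : ℝ) + 1) ^ 2 := by push_cast; ring
      have h2 : ‖Complex.exp (2 * (Real.pi : ℂ) * I * w)‖ ≤ r := by
        rw [Complex.norm_exp]
        apply Real.exp_le_exp.mpr
        have hre : (2 * (Real.pi : ℂ) * I * w).re = -(2 * Real.pi * w.im) := by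
          simp [Complex.mul_re, Complex.mul_im]
        rw [hre]
        have := Real.pi_pos
        nlinarith
      exact mul_le_mul h1 (pow_le_pow_left₀ (norm_nonneg _) h2 _) (by positivity) (by positivity)
    · intro i
      apply Differentiable.differentiableOn
      exact ((Complex.differentiable_exp.comp ((differentiable_id.const_mul _))).pow _).const_mul _
  have hd := key.differentiableAt (hU.mem_nhds hmem)
  unfold E2
  exact (hd.const_mul (24 : ℂ)).const_sub 1

/-- The auxiliary functions `h^f_m` (depending on `n`). -/
noncomputable def hfun (n : ℕ) (f : ℂ → ℂ) (m : ℕ) (τ : ℂ) : ℂ :=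
  ((Real.pi : ℂ) * I / (6 * (m.factorial : ℂ))) *
    ∑ k ∈ Finset.range (2 * n + 1),
      iteratedDeriv k f τ * iteratedDeriv (2 * n + m - k) E2 τ
        / ((k.factorial : ℂ) * ((2 * n - k + m + 1).factorial : ℂ))

lemma aux_frac (a x y p q : ℂ) (hp : p ≠ 0) (hq : q ≠ 0) (hx : x + 1 ≠ 0) (hy : y + 1 ≠ 0) :
    a / (p * ((y + 1) * q)) + a / ((x + 1) * p * q)
      = (x + 1 + (y + 1)) * (a / ((x + 1) * p * ((y + 1) * q))) := by
  field_simp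

lemma aux_frac2 (a b c q : ℂ) (hq : q ≠ 0) (hb : b ≠ 0) (hc : c ≠ 0) :
    a / (c * q) = b * (a / (c * (b * q))) := by
  field_simp

lemma hfun_key (A B : ℕ → ℂ) (N k : ℕ) :
    ∑ j ∈ Finset.range (N + 1),
        (A (j + 1) * B (N + k - j) + A j * B (N + k - j + 1))
          / ((j.factorial : ℂ) * ((N - j + k + 1).factorial : ℂ))
      = ((N + k + 2 : ℕ) : ℂ) *
          ∑ j ∈ Finset.range (N + 1),
            A j * B (N + k + 1 - j) / ((j.factorial : ℂ) * ((N - j + k + 2).factorial : ℂ))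
        + A (N + 1) * B k / ((N.factorial : ℂ) * ((k + 1).factorial : ℂ)) := by
  have fact_ne : ∀ m : ℕ, ((m.factorial : ℂ)) ≠ 0 :=
    fun m => Nat.cast_ne_zero.2 m.factorial_ne_zero
  have split : ∀ j, (A (j + 1) * B (N + k - j) + A j * B (N + k - j + 1))
          / ((j.factorial : ℂ) * ((N - j + k + 1).factorial : ℂ))
      = A (j + 1) * B (N + k - j) / ((j.factorial : ℂ) * ((N - j + k + 1).factorial : ℂ))
        + A j * B (N + k - j + 1) / ((j.factorial : ℂ) * ((N - j + k + 1).factorial : ℂ)) :=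
    fun j => add_div _ _ _
  simp only [split]
  rw [Finset.sum_add_distrib]
  rw [Finset.sum_range_succ
    (fun j => A (j + 1) * B (N + k - j) / ((j.factorial : ℂ) * ((N - j + k + 1).factorial : ℂ))) N]
  rw [Finset.sum_range_succ'
    (fun j => A j * B (N + k - j + 1) / ((j.factorial : ℂ) * ((N - j + k + 1).factorial : ℂ))) N]
  rw [Finset.sum_range_succ'
    (fun j => A j * B (N + k + 1 - j) / ((j.factorial : ℂ) * ((N - j + k + 2).factorial : ℂ))) N]
  have hlast : A (N + 1) * B (N + k - N) / ((N.factorial : ℂ) * ((N - N + k + 1).factorial : ℂ))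
      = A (N + 1) * B k / ((N.factorial : ℂ) * ((k + 1).factorial : ℂ)) := by
    have e1 : N + k - N = k := by omega
    have e2 : N - N + k + 1 = k + 1 := by omega
    rw [e1, e2]
  rw [hlast, mul_add, Finset.mul_sum]
  have hsum : ∀ j ∈ Finset.range N,
      A (j + 1) * B (N + k - j) / ((j.factorial : ℂ) * ((N - j + k + 1).factorial : ℂ))
        + A (j + 1) * B (N + k - (j + 1) + 1)
            / (((j + 1).factorial : ℂ) * ((N - (j + 1) + k + 1).factorial : ℂ))
      = ((N + k + 2 : ℕ) : ℂ) * (A (j + 1) * B (N + k + 1 - (j + 1))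
            / (((j + 1).factorial : ℂ) * ((N - (j + 1) + k + 2).factorial : ℂ))) := by
    intro j hj
    rw [Finset.mem_range] at hj
    have e1 : N + k - (j + 1) + 1 = N + k - j := by omega
    have e2 : N + k + 1 - (j + 1) = N + k - j := by omega
    have e3 : N - (j + 1) + k + 1 = N - j + k := by omega
    have e4 : N - (j + 1) + k + 2 = N - j + k + 1 := by omega
    rw [e1, e2, e3, e4]
    have f1 : (((j + 1).factorial : ℕ) : ℂ) = ((j : ℂ) + 1) * (j.factorial : ℂ) := by
      rw [Nat.factorial_succ]; push_cast; ring
    have f2 : (((N - j + k + 1).factorial : ℕ) : ℂ)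
        = (((N - j + k : ℕ) : ℂ) + 1) * ((N - j + k).factorial : ℂ) := by
      rw [Nat.factorial_succ]; push_cast; ring
    have hc : ((N + k + 2 : ℕ) : ℂ) = ((j : ℂ) + 1) + (((N - j + k : ℕ) : ℂ) + 1) := by
      have h : N + k + 2 = (j + 1) + ((N - j + k) + 1) := by omega
      rw [h]; push_cast; ring
    rw [f1, f2, hc]
    exact aux_frac _ _ _ _ _ (fact_ne j) (fact_ne (N - j + k))
      (Nat.cast_add_one_ne_zero j) (Nat.cast_add_one_ne_zero _)
  have hmid :
      (∑ j ∈ Finset.range N,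
          A (j + 1) * B (N + k - j) / ((j.factorial : ℂ) * ((N - j + k + 1).factorial : ℂ)))
        + ∑ j ∈ Finset.range N,
            A (j + 1) * B (N + k - (j + 1) + 1)
              / (((j + 1).factorial : ℂ) * ((N - (j + 1) + k + 1).factorial : ℂ))
      = ∑ j ∈ Finset.range N,
          ((N + k + 2 : ℕ) : ℂ) * (A (j + 1) * B (N + k + 1 - (j + 1))
            / (((j + 1).factorial : ℂ) * ((N - (j + 1) + k + 2).factorial : ℂ))) := by
    rw [← Finset.sum_add_distrib]
    exact Finset.sum_congr rfl hsum
  have hfirst : A 0 * B (N + k - 0 + 1)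
        / (((0 : ℕ).factorial : ℂ) * ((N - 0 + k + 1).factorial : ℂ))
      = ((N + k + 2 : ℕ) : ℂ) * (A 0 * B (N + k + 1 - 0)
          / (((0 : ℕ).factorial : ℂ) * ((N - 0 + k + 2).factorial : ℂ))) := by
    have e1 : N + k - 0 + 1 = N + k + 1 := by omega
    have e2 : N + k + 1 - 0 = N + k + 1 := by omega
    have e3 : N - 0 + k + 1 = N + k + 1 := by omega
    have e4 : N - 0 + k + 2 = N + k + 2 := by omega
    rw [e1, e2, e3, e4]
    have f2 : (((N + k + 2).factorial : ℕ) : ℂ)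
        = ((N + k + 2 : ℕ) : ℂ) * ((N + k + 1).factorial : ℂ) := by
      rw [show N + k + 2 = (N + k + 1) + 1 from rfl, Nat.factorial_succ]; push_cast; ring
    rw [f2]
    exact aux_frac2 _ _ _ _ (fact_ne _) (Nat.cast_ne_zero.2 (by positivity)) (fact_ne 0)
  linear_combination hmid + hfirst

/-- `(h^f_k)′ = (2n+k+2)(k+1)·h^f_{k+1} + (πi/(6·(2n)!·k!·(k+1)!))·f^{(2n+1)}·E₂^{(k)}`
on `ℍ`. -/
theorem hfun_deriv (n : ℕ) (f : ℂ → ℂ) (hf : HoloOnH f) :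
    ∀ k : ℕ, ∀ τ : ℂ, 0 < τ.im →
      deriv (hfun n f k) τ
        = ((2 * n + k + 2 : ℕ) : ℂ) * ((k : ℂ) + 1) * hfun n f (k + 1) τ
          + ((Real.pi : ℂ) * I
              / (6 * ((2 * n).factorial : ℂ) * (k.factorial : ℂ) * ((k + 1).factorial : ℂ)))
            * iteratedDeriv (2 * n + 1) f τ * iteratedDeriv k E2 τ := by
  intro k τ hτ
  have hopen : IsOpen {z : ℂ | 0 < z.im} := isOpen_lt continuous_const Complex.continuous_im
  have hfd : DifferentiableOn ℂ f {z : ℂ | 0 < z.im} :=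
    fun z hz => (hf z hz).differentiableWithinAt
  have hfa : AnalyticOnNhd ℂ f {z : ℂ | 0 < z.im} := hfd.analyticOnNhd hopen
  have hEa : AnalyticOnNhd ℂ E2 {z : ℂ | 0 < z.im} := E2_diffOn.analyticOnNhd hopen
  have dA : ∀ j : ℕ, DifferentiableAt ℂ (iteratedDeriv j f) τ := by
    intro j
    rw [iteratedDeriv_eq_iterate]
    exact ((hfa.iterated_deriv j) τ hτ).differentiableAt
  have dB : ∀ m : ℕ, DifferentiableAt ℂ (iteratedDeriv m E2) τ := by
    intro m
    rw [iteratedDeriv_eq_iterate]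
    exact ((hEa.iterated_deriv m) τ hτ).differentiableAt
  have hderiv : deriv (hfun n f k) τ
      = ((Real.pi : ℂ) * I / (6 * (k.factorial : ℂ))) *
        ∑ j ∈ Finset.range (2 * n + 1),
          (iteratedDeriv (j + 1) f τ * iteratedDeriv (2 * n + k - j) E2 τ
            + iteratedDeriv j f τ * iteratedDeriv (2 * n + k - j + 1) E2 τ)
            / ((j.factorial : ℂ) * ((2 * n - j + k + 1).factorial : ℂ)) := by
    have heq : hfun n f k = fun τ => ((Real.pi : ℂ) * I / (6 * (k.factorial : ℂ))) *
        ∑ j ∈ Finset.range (2 * n + 1),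
          iteratedDeriv j f τ * iteratedDeriv (2 * n + k - j) E2 τ
            / ((j.factorial : ℂ) * ((2 * n - j + k + 1).factorial : ℂ)) := rfl
    rw [heq, deriv_const_mul_field]
    congr 1
    rw [deriv_fun_sum (fun j _ => (((dA j).fun_mul (dB (2 * n + k - j))).div_const _))]
    apply Finset.sum_congr rfl
    intro j _
    rw [deriv_div_const, deriv_fun_mul (dA j) (dB (2 * n + k - j))]
    simp only [← iteratedDeriv_succ]
  rw [hderiv]
  have hk := hfun_key (fun j => iteratedDeriv j f τ) (fun m => iteratedDeriv m E2 τ) (2 * n) k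
  rw [hk]
  have hfunval : hfun n f (k + 1) τ
      = ((Real.pi : ℂ) * I / (6 * ((k + 1).factorial : ℂ))) *
        ∑ j ∈ Finset.range (2 * n + 1),
          iteratedDeriv j f τ * iteratedDeriv (2 * n + k + 1 - j) E2 τ
            / ((j.factorial : ℂ) * ((2 * n - j + k + 2).factorial : ℂ)) := rfl
  rw [hfunval]
  have hfac : (((k + 1).factorial : ℕ) : ℂ) = ((k : ℂ) + 1) * (k.factorial : ℂ) := by
    rw [Nat.factorial_succ]; push_cast; ring
  have h1 : (k.factorial : ℂ) ≠ 0 := Nat.cast_ne_zero.2 k.factorial_ne_zero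
  have h2 : ((2 * n).factorial : ℂ) ≠ 0 := Nat.cast_ne_zero.2 (2 * n).factorial_ne_zero
  have h3 : ((k : ℂ) + 1) ≠ 0 := Nat.cast_add_one_ne_zero k
  have h4 : (((k + 1).factorial : ℕ) : ℂ) ≠ 0 := Nat.cast_ne_zero.2 (k + 1).factorial_ne_zero
  have c1 : (Real.pi : ℂ) * I / (6 * (k.factorial : ℂ)) * ((2 * n + k + 2 : ℕ) : ℂ)
      = ((2 * n + k + 2 : ℕ) : ℂ) * ((k : ℂ) + 1)
          * ((Real.pi : ℂ) * I / (6 * ((k + 1).factorial : ℂ))) := by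
    rw [hfac]; field_simp
  have c2 : (Real.pi : ℂ) * I / (6 * (k.factorial : ℂ))
        * (1 / (((2 * n).factorial : ℂ) * ((k + 1).factorial : ℂ)))
      = (Real.pi : ℂ) * I
          / (6 * ((2 * n).factorial : ℂ) * (k.factorial : ℂ) * ((k + 1).factorial : ℂ)) := by
    field_simp
  linear_combination
    (∑ j ∈ Finset.range (2 * n + 1),
        iteratedDeriv j f τ * iteratedDeriv (2 * n + k + 1 - j) E2 τ
          / ((j.factorial : ℂ) * ((2 * n - j + k + 2).factorial : ℂ))) * c1
    + (iteratedDeriv (2 * n + 1) f τ * iteratedDeriv k E2 τ) * c2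
end
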